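/- Let K > 0, let η : (0,∞)² → [0,∞) be continuous with η(x,y) ≤ K·(x²+y²)^{−3/2} for all x, y > 0, and let q : (0,∞) → (0,∞) be non-increasing. Then lim_{ℓ ↓ 0} (1/(2ℓ))·∫_0^∞ ( ∫_{(1−ℓ)·q(u)}^{(1+ℓ)·q(u)} η(u,v) dv ) du = ∫_0^∞ q(u)·η(u, q(u)) du, and both sides are finite. -/

import Mathlib

open MeasureTheory Set Filter
open scoped ENNReal

lemma aux_indicator_measurable {g : ℝ × ℝ → ℝ≥0∞} {s : Set (ℝ × ℝ)} (hs : IsOpen s)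
    (hg : ContinuousOn g s) : Measurable (s.indicator g) := by
  apply measurable_of_isOpen
  intro t ht
  by_cases h0 : (0:ℝ≥0∞) ∈ t
  · have h : s.indicator g ⁻¹' t = (s ∩ g ⁻¹' t) ∪ sᶜ := by
      ext x; by_cases hx : x ∈ s <;> simp [Set.indicator_apply, hx, h0]
    rw [h]
    exact ((hg.isOpen_inter_preimage hs ht).measurableSet).union hs.measurableSet.compl
  · have h : s.indicator g ⁻¹' t = s ∩ g ⁻¹' t := by
      ext x; by_cases hx : x ∈ s <;> simp [Set.indicator_apply, hx, h0]
    rw [h]; exact (hg.isOpen_inter_preimage hs ht).measurableSet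

lemma aux_qt_measurable {q : ℝ → ℝ} (hq : AntitoneOn q (Set.Ioi 0)) :
    Measurable ((Set.Ioi (0:ℝ)).indicator q) := by
  apply measurable_of_Iio
  intro a
  have hA : MeasurableSet {x : ℝ | 0 < x ∧ q x < a} := by
    apply Set.OrdConnected.measurableSet
    constructor
    intro x hx y hy z hz
    exact ⟨lt_of_lt_of_le hx.1 hz.1,
      lt_of_le_of_lt (hq hx.1 (lt_of_lt_of_le hx.1 hz.1) hz.1) hx.2⟩
  by_cases h0 : (0:ℝ) < a
  · have h : (Set.Ioi (0:ℝ)).indicator q ⁻¹' Iio a = {x : ℝ | 0 < x ∧ q x < a} ∪ Iic 0 := by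
      ext x
      by_cases hx : (0:ℝ) < x <;>
        simp [Set.indicator_apply, hx, h0, not_lt.mp, le_of_not_gt]
    rw [h]; exact hA.union measurableSet_Iic
  · have h : (Set.Ioi (0:ℝ)).indicator q ⁻¹' Iio a = {x : ℝ | 0 < x ∧ q x < a} := by
      ext x
      by_cases hx : (0:ℝ) < x <;>
        simp [Set.indicator_apply, hx, h0]
    rw [h]; exact hA

lemma aux_rpow8 {x y : ℝ} (hy : 0 < y) (hxy : y/4 ≤ x) :
    x ^ (-(3:ℝ)/2) ≤ 8 * y ^ (-(3:ℝ)/2) := by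
  have h4 : (4:ℝ) ^ (-(3:ℝ)/2) = 1/8 := by
    rw [show (-(3:ℝ)/2) = -((3:ℝ)/2) by ring, Real.rpow_neg (by norm_num : (0:ℝ) ≤ 4)]
    rw [show (4:ℝ) ^ ((3:ℝ)/2) = 8 from ?_]
    · norm_num
    · rw [show (4:ℝ) = 2^(2:ℕ) by norm_num, ← Real.rpow_natCast (2:ℝ) 2,
        ← Real.rpow_mul (by norm_num : (0:ℝ) ≤ 2)]
      norm_num
  have h1 : x ^ (-(3:ℝ)/2) ≤ (y/4) ^ (-(3:ℝ)/2) :=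
    Real.rpow_le_rpow_of_nonpos (by linarith) hxy (by norm_num)
  have h2 : (y/4) ^ (-(3:ℝ)/2) = 8 * y ^ (-(3:ℝ)/2) := by
    rw [Real.div_rpow hy.le (by norm_num : (0:ℝ) ≤ 4), h4]
    ring
  linarith

lemma aux_rpow_sq {s : ℝ} (hs : 0 < s) : (s^2) ^ (-(3:ℝ)/2) = s ^ (-3:ℝ) := by
  rw [← Real.rpow_natCast s 2, ← Real.rpow_mul hs.le]
  norm_num

lemma aux_real_ratio {f : ℝ → ℝ} {c : ℝ} (hc : 0 < c)
    (hf : ContinuousOn f (Set.Ioi 0)) :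
    Tendsto (fun ℓ : ℝ => (2*ℓ)⁻¹ * ∫ v in Set.Ioo ((1-ℓ)*c) ((1+ℓ)*c), f v)
      (nhdsWithin 0 (Set.Ioi 0)) (nhds (c * f c)) := by
  rw [Metric.tendsto_nhdsWithin_nhds]
  intro ε hε
  have hfc : ContinuousAt f c := hf.continuousAt (Ioi_mem_nhds hc)
  obtain ⟨δ₀, hδ₀, hball⟩ := Metric.continuousAt_iff.mp hfc (ε/(4*c)) (by positivity)
  refine ⟨min (δ₀/c) (1/2), by positivity, ?_⟩
  intro ℓ hℓmem hdist
  have hℓpos : 0 < ℓ := hℓmem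
  rw [Real.dist_eq, sub_zero, abs_of_pos hℓpos] at hdist
  have hℓhalf : ℓ < 1/2 := lt_of_lt_of_le hdist (min_le_right _ _)
  have hℓδ : ℓ * c < δ₀ := by
    have := lt_of_lt_of_le hdist (min_le_left _ _)
    calc ℓ * c < (δ₀/c) * c := by nlinarith
    _ = δ₀ := by field_simp
  set a := (1-ℓ)*c with ha_def
  set b := (1+ℓ)*c with hb_def
  have ha : 0 < a := by rw [ha_def]; nlinarith
  have hab : a < b := by rw [ha_def, hb_def]; nlinarith
  have hsub : Set.Icc a b ⊆ Set.Ioi 0 := fun v hv => lt_of_lt_of_le ha hv.1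
  have hInt : IntegrableOn f (Set.Ioo a b) volume :=
    ((hf.mono hsub).integrableOn_Icc).mono_set Set.Ioo_subset_Icc_self
  have key : ∀ v ∈ Set.Ioo a b, |f v - f c| < ε/(4*c) := by
    intro v hv
    have h1 : dist v c < δ₀ := by
      rw [Real.dist_eq, abs_lt]
      constructor
      · have : a - c = -(ℓ*c) := by rw [ha_def]; ring
        nlinarith [hv.1]
      · have : b - c = ℓ*c := by rw [hb_def]; ring
        nlinarith [hv.2]
    have := hball h1
    rwa [Real.dist_eq] at this
  have hvol : (volume (Set.Ioo a b)).toReal = 2*ℓ*c := by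
    rw [Real.volume_Ioo, ENNReal.toReal_ofReal (by linarith)]
    rw [ha_def, hb_def]; ring
  have hconst : ∀ C : ℝ, ∫ _ in Set.Ioo a b, C = (2*ℓ*c) * C := by
    intro C
    rw [setIntegral_const, measureReal_def, hvol, smul_eq_mul]
  have hIc : IntegrableOn (fun _ : ℝ => f c + ε/(4*c)) (Set.Ioo a b) volume :=
    integrableOn_const measure_Ioo_lt_top.ne
  have hIc' : IntegrableOn (fun _ : ℝ => f c - ε/(4*c)) (Set.Ioo a b) volume :=
    integrableOn_const measure_Ioo_lt_top.ne
  have hup : ∫ v in Set.Ioo a b, f v ≤ (2*ℓ*c) * (f c + ε/(4*c)) := by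
    rw [← hconst]
    refine setIntegral_mono_on hInt hIc measurableSet_Ioo ?_
    intro v hv
    have := abs_lt.mp (key v hv)
    linarith [this.2]
  have hlo : (2*ℓ*c) * (f c - ε/(4*c)) ≤ ∫ v in Set.Ioo a b, f v := by
    rw [← hconst]
    refine setIntegral_mono_on hIc' hInt measurableSet_Ioo ?_
    intro v hv
    have := abs_lt.mp (key v hv)
    linarith [this.1]
  have h2ℓ : 0 < (2*ℓ)⁻¹ := by positivity
  rw [Real.dist_eq, abs_lt]
  have e1 : (2*ℓ)⁻¹ * ((2*ℓ*c) * (f c + ε/(4*c))) = c * f c + ε/4 := by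
    field_simp
  have e2 : (2*ℓ)⁻¹ * ((2*ℓ*c) * (f c - ε/(4*c))) = c * f c - ε/4 := by
    field_simp
  constructor
  · have := mul_le_mul_of_nonneg_left hlo h2ℓ.le
    rw [e2] at this
    linarith
  · have := mul_le_mul_of_nonneg_left hup h2ℓ.le
    rw [e1] at this
    linarith

lemma aux_enn_ratio {f : ℝ → ℝ} {c : ℝ} (hc : 0 < c)
    (hf : ContinuousOn f (Set.Ioi 0)) (hfn : ∀ v : ℝ, 0 < v → 0 ≤ f v) :
    Tendsto (fun ℓ : ℝ => (ENNReal.ofReal (2*ℓ))⁻¹ *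
      ∫⁻ v in Set.Ioo ((1-ℓ)*c) ((1+ℓ)*c), ENNReal.ofReal (f v))
      (nhdsWithin 0 (Set.Ioi 0)) (nhds (ENNReal.ofReal (c * f c))) := by
  have hcomp := (ENNReal.continuous_ofReal.tendsto _).comp (aux_real_ratio hc hf)
  refine Tendsto.congr' ?_ hcomp
  have hmem : Set.Ioo (0:ℝ) 1 ∈ nhdsWithin 0 (Set.Ioi 0) :=
    Ioo_mem_nhdsGT zero_lt_one
  filter_upwards [hmem] with ℓ hℓ
  have ha : 0 < (1-ℓ)*c := by nlinarith [hℓ.1, hℓ.2]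
  have hsub : Set.Icc ((1-ℓ)*c) ((1+ℓ)*c) ⊆ Set.Ioi 0 := fun v hv => lt_of_lt_of_le ha hv.1
  have hInt : IntegrableOn f (Set.Ioo ((1-ℓ)*c) ((1+ℓ)*c)) volume :=
    ((hf.mono hsub).integrableOn_Icc).mono_set Set.Ioo_subset_Icc_self
  have hnn : 0 ≤ᵐ[volume.restrict (Set.Ioo ((1-ℓ)*c) ((1+ℓ)*c))] f :=
    (ae_restrict_iff' measurableSet_Ioo).mpr
      (ae_of_all _ fun v hv => hfn v (lt_trans ha hv.1))
  show ENNReal.ofReal ((2*ℓ)⁻¹ * ∫ v in Set.Ioo ((1-ℓ)*c) ((1+ℓ)*c), f v) = _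
  rw [ENNReal.ofReal_mul (inv_nonneg.mpr (by linarith [hℓ.1])),
    ofReal_integral_eq_lintegral_ofReal hInt hnn,
    ENNReal.ofReal_inv_of_pos (by linarith [hℓ.1] : (0:ℝ) < 2*ℓ)]

lemma aux_bound {K : ℝ} (hK : 0 < K) {η : ℝ × ℝ → ℝ}
    (hηbd : ∀ x y : ℝ, 0 < x → 0 < y → η (x, y) ≤ K * (x ^ 2 + y ^ 2) ^ (-(3:ℝ)/2))
    {u c ℓ : ℝ} (hu : 0 < u) (hc : 0 < c) (hℓ : 0 < ℓ) (hℓ2 : ℓ ≤ 1/2) :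
    (ENNReal.ofReal (2*ℓ))⁻¹ *
        ∫⁻ v in Set.Ioo ((1-ℓ)*c) ((1+ℓ)*c), ENNReal.ofReal (η (u, v))
      ≤ ENNReal.ofReal (8*K*c*(u^2+c^2) ^ (-(3:ℝ)/2)) := by
  set a := (1-ℓ)*c with ha_def
  set b := (1+ℓ)*c with hb_def
  have ha : 0 < a := by rw [ha_def]; nlinarith
  set C := K * (u^2 + a^2) ^ (-(3:ℝ)/2) with hC_def
  have hpt : ∀ v ∈ Set.Ioo a b, ENNReal.ofReal (η (u, v)) ≤ ENNReal.ofReal C := by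
    intro v hv
    have hv0 : 0 < v := lt_trans ha hv.1
    refine ENNReal.ofReal_le_ofReal ?_
    refine le_trans (hηbd u v hu hv0) ?_
    refine mul_le_mul_of_nonneg_left ?_ hK.le
    refine Real.rpow_le_rpow_of_nonpos (by positivity) ?_ (by norm_num)
    nlinarith [hv.1, ha]
  have hint : ∫⁻ v in Set.Ioo a b, ENNReal.ofReal (η (u, v))
      ≤ ENNReal.ofReal C * ENNReal.ofReal (2*ℓ*c) := by
    calc ∫⁻ v in Set.Ioo a b, ENNReal.ofReal (η (u, v))
        ≤ ∫⁻ _ in Set.Ioo a b, ENNReal.ofReal C :=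
          lintegral_mono_ae ((ae_restrict_iff' measurableSet_Ioo).mpr (ae_of_all _ hpt))
      _ = ENNReal.ofReal C * volume (Set.Ioo a b) := setLIntegral_const _ _
      _ = ENNReal.ofReal C * ENNReal.ofReal (2*ℓ*c) := by
          rw [Real.volume_Ioo]
          congr 1
          rw [ha_def, hb_def]; ring
  have hx0 : ENNReal.ofReal (2*ℓ) ≠ 0 := by
    simp only [ne_eq, ENNReal.ofReal_eq_zero, not_le]; linarith
  have hxt : ENNReal.ofReal (2*ℓ) ≠ ⊤ := ENNReal.ofReal_ne_top
  calc (ENNReal.ofReal (2*ℓ))⁻¹ * ∫⁻ v in Set.Ioo a b, ENNReal.ofReal (η (u, v))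
      ≤ (ENNReal.ofReal (2*ℓ))⁻¹ * (ENNReal.ofReal C * ENNReal.ofReal (2*ℓ*c)) :=
        mul_le_mul_right hint _
    _ = ENNReal.ofReal C * ENNReal.ofReal c := by
        rw [show (2*ℓ*c) = (2*ℓ)*c by ring, ENNReal.ofReal_mul (by linarith : (0:ℝ) ≤ 2*ℓ)]
        rw [show (ENNReal.ofReal (2*ℓ))⁻¹ * (ENNReal.ofReal C *
            (ENNReal.ofReal (2*ℓ) * ENNReal.ofReal c)) =
            ((ENNReal.ofReal (2*ℓ))⁻¹ * ENNReal.ofReal (2*ℓ)) *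
            (ENNReal.ofReal C * ENNReal.ofReal c) by ring_nf]
        rw [ENNReal.inv_mul_cancel hx0 hxt, one_mul]
    _ = ENNReal.ofReal (C * c) := (ENNReal.ofReal_mul (by positivity)).symm
    _ ≤ ENNReal.ofReal (8*K*c*(u^2+c^2) ^ (-(3:ℝ)/2)) := by
        refine ENNReal.ofReal_le_ofReal ?_
        rw [hC_def]
        have h8 : (u^2+a^2) ^ (-(3:ℝ)/2) ≤ 8 * (u^2+c^2) ^ (-(3:ℝ)/2) := by
          refine aux_rpow8 (by positivity) ?_
          have : c/2 ≤ a := by rw [ha_def]; nlinarith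
          nlinarith [sq_nonneg u, sq_nonneg c]
        have hr : (0:ℝ) ≤ (u^2+c^2) ^ (-(3:ℝ)/2) := by positivity
        nlinarith [mul_le_mul_of_nonneg_left h8 hK.le]

lemma aux_fin {K : ℝ} (hK : 0 < K) {q : ℝ → ℝ} (hq : AntitoneOn q (Set.Ioi 0))
    (hqpos : ∀ x : ℝ, 0 < x → 0 < q x) :
    ∫⁻ u in Set.Ioi (0:ℝ), ENNReal.ofReal (8*K*q u*(u^2+ q u ^2) ^ (-(3:ℝ)/2)) < ⊤ := by
  rw [← Ioc_union_Ioi_eq_Ioi (zero_le_one (α := ℝ)),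
    lintegral_union measurableSet_Ioi Ioc_disjoint_Ioi_same]
  have hq1 : 0 < q 1 := hqpos 1 one_pos
  refine ENNReal.add_lt_top.mpr ⟨?_, ?_⟩
  · have key : ∀ u ∈ Set.Ioc (0:ℝ) 1,
        ENNReal.ofReal (8*K*q u*(u^2+ q u ^2) ^ (-(3:ℝ)/2))
          ≤ ENNReal.ofReal (8*K*(q 1) ^ (-(2:ℝ))) := by
      intro u hu
      have hqu : 0 < q u := hqpos u hu.1
      have h1 : (u^2+ q u ^2) ^ (-(3:ℝ)/2) ≤ (q u ^2) ^ (-(3:ℝ)/2) :=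
        Real.rpow_le_rpow_of_nonpos (by positivity) (by nlinarith [sq_nonneg u]) (by norm_num)
      have h2 : q u * (q u ^2) ^ (-(3:ℝ)/2) = q u ^ (-2:ℝ) := by
        rw [aux_rpow_sq hqu]
        rw [show q u * q u ^ (-3:ℝ) = q u ^ (1:ℝ) * q u ^ (-3:ℝ) by rw [Real.rpow_one],
          ← Real.rpow_add hqu]
        norm_num
      have h3 : q u ^ (-2:ℝ) ≤ q 1 ^ (-2:ℝ) :=
        Real.rpow_le_rpow_of_nonpos hq1 (hq hu.1 (Set.mem_Ioi.mpr one_pos) hu.2) (by norm_num)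
      refine ENNReal.ofReal_le_ofReal ?_
      have hrn : (0:ℝ) ≤ (u^2+ q u ^2) ^ (-(3:ℝ)/2) := by positivity
      nlinarith [mul_le_mul_of_nonneg_left h1 hqu.le]
    calc ∫⁻ u in Set.Ioc (0:ℝ) 1, ENNReal.ofReal (8*K*q u*(u^2+ q u ^2) ^ (-(3:ℝ)/2))
        ≤ ∫⁻ _ in Set.Ioc (0:ℝ) 1, ENNReal.ofReal (8*K*(q 1) ^ (-(2:ℝ))) :=
          lintegral_mono_ae ((ae_restrict_iff' measurableSet_Ioc).mpr (ae_of_all _ key))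
      _ = ENNReal.ofReal (8*K*(q 1) ^ (-(2:ℝ))) * volume (Set.Ioc (0:ℝ) 1) :=
          setLIntegral_const _ _
      _ < ⊤ := by
          rw [Real.volume_Ioc]
          exact ENNReal.mul_lt_top ENNReal.ofReal_lt_top ENNReal.ofReal_lt_top
  · have key : ∀ u ∈ Set.Ioi (1:ℝ),
        ENNReal.ofReal (8*K*q u*(u^2+ q u ^2) ^ (-(3:ℝ)/2))
          ≤ ENNReal.ofReal (8*K*q 1 * u ^ (-3:ℝ)) := by
      intro u hu
      have hu1 : (1:ℝ) < u := hu
      have hu0 : (0:ℝ) < u := lt_trans one_pos hu1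
      have hqu : 0 < q u := hqpos u hu0
      have hqle : q u ≤ q 1 := hq (Set.mem_Ioi.mpr one_pos) (Set.mem_Ioi.mpr hu0) hu1.le
      have h1 : (u^2+ q u ^2) ^ (-(3:ℝ)/2) ≤ (u^2) ^ (-(3:ℝ)/2) :=
        Real.rpow_le_rpow_of_nonpos (by positivity) (by nlinarith [sq_nonneg (q u)])
          (by norm_num)
      rw [aux_rpow_sq hu0] at h1
      refine ENNReal.ofReal_le_ofReal ?_
      have hrn : (0:ℝ) ≤ (u^2+ q u ^2) ^ (-(3:ℝ)/2) := by positivity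
      have hu3 : (0:ℝ) ≤ u ^ (-3:ℝ) := by positivity
      nlinarith [mul_le_mul_of_nonneg_left h1 hqu.le,
        mul_le_mul_of_nonneg_right hqle hu3]
    have hInt : IntegrableOn (fun u : ℝ => 8*K*q 1 * u ^ (-3:ℝ)) (Set.Ioi 1) volume :=
      (integrableOn_Ioi_rpow_of_lt (by norm_num) one_pos).const_mul _
    calc ∫⁻ u in Set.Ioi (1:ℝ), ENNReal.ofReal (8*K*q u*(u^2+ q u ^2) ^ (-(3:ℝ)/2))
        ≤ ∫⁻ u in Set.Ioi (1:ℝ), ENNReal.ofReal (8*K*q 1 * u ^ (-3:ℝ)) :=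
          lintegral_mono_ae ((ae_restrict_iff' measurableSet_Ioi).mpr (ae_of_all _ key))
      _ < ⊤ := hInt.setLIntegral_lt_top

lemma aux_F_meas {qt : ℝ → ℝ} (hqt : Measurable qt) {et : ℝ × ℝ → ℝ≥0∞}
    (het : Measurable et) (ℓ : ℝ) :
    Measurable (fun u : ℝ => (ENNReal.ofReal (2*ℓ))⁻¹ *
      ∫⁻ v in Set.Ioo ((1-ℓ)*qt u) ((1+ℓ)*qt u), et (u, v)) := by
  refine Measurable.const_mul ?_ _
  have heq : (fun u : ℝ => ∫⁻ v in Set.Ioo ((1-ℓ)*qt u) ((1+ℓ)*qt u), et (u, v))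
      = fun u : ℝ => ∫⁻ v, ({p : ℝ × ℝ | (1-ℓ)*qt p.1 < p.2 ∧ p.2 < (1+ℓ)*qt p.1}.indicator
          et) (u, v) := by
    funext u
    rw [← lintegral_indicator measurableSet_Ioo]
    refine lintegral_congr fun v => ?_
    by_cases hv : v ∈ Set.Ioo ((1-ℓ)*qt u) ((1+ℓ)*qt u)
    · rw [Set.indicator_of_mem hv, Set.indicator_of_mem (show ((u,v) : ℝ × ℝ) ∈
        {p : ℝ × ℝ | (1-ℓ)*qt p.1 < p.2 ∧ p.2 < (1+ℓ)*qt p.1} from ⟨hv.1, hv.2⟩)]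
    · rw [Set.indicator_of_notMem hv, Set.indicator_of_notMem
        (fun h => hv ⟨h.1, h.2⟩)]
  rw [heq]
  have hS : MeasurableSet {p : ℝ × ℝ | (1-ℓ)*qt p.1 < p.2 ∧ p.2 < (1+ℓ)*qt p.1} := by
    refine MeasurableSet.inter ?_ ?_
    · exact measurableSet_lt ((hqt.comp measurable_fst).const_mul _) measurable_snd
    · exact measurableSet_lt measurable_snd ((hqt.comp measurable_fst).const_mul _)
  exact Measurable.lintegral_prod_right (f := fun u v => _) (het.indicator hS)

/-- Consistency of the variance-integral estimator: for a continuous density `η`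
bounded by `K (x²+y²)^{-3/2}` and non-increasing `q : (0,∞) → (0,∞)`,
`(1/(2ℓ)) ∫_0^∞ ∫_{(1-ℓ)q(u)}^{(1+ℓ)q(u)} η(u,v) dv du → ∫_0^∞ q(u) η(u,q(u)) du`
as `ℓ ↓ 0`, and the limit is finite. -/
theorem variance_integral_estimator_limit
    (K : ℝ) (hK : 0 < K) (η : ℝ × ℝ → ℝ)
    (hηc : ContinuousOn η {p : ℝ × ℝ | 0 < p.1 ∧ 0 < p.2})
    (hηpos : ∀ x y : ℝ, 0 < x → 0 < y → 0 ≤ η (x, y))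
    (hηbd : ∀ x y : ℝ, 0 < x → 0 < y → η (x, y) ≤ K * (x ^ 2 + y ^ 2) ^ (-(3 : ℝ) / 2))
    (q : ℝ → ℝ) (hq : AntitoneOn q (Set.Ioi 0)) (hqpos : ∀ x : ℝ, 0 < x → 0 < q x) :
    Tendsto
      (fun ℓ : ℝ => (ENNReal.ofReal (2 * ℓ))⁻¹ *
        ∫⁻ u in Set.Ioi (0 : ℝ), ∫⁻ v in Set.Ioo ((1 - ℓ) * q u) ((1 + ℓ) * q u),
          ENNReal.ofReal (η (u, v)))
      (nhdsWithin 0 (Set.Ioi 0))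
      (nhds (∫⁻ u in Set.Ioi (0 : ℝ), ENNReal.ofReal (q u * η (u, q u)))) ∧
    (∫⁻ u in Set.Ioi (0 : ℝ), ENNReal.ofReal (q u * η (u, q u))) < ⊤ := by
  have hU : IsOpen {p : ℝ × ℝ | 0 < p.1 ∧ 0 < p.2} :=
    (isOpen_lt continuous_const continuous_fst).inter
      (isOpen_lt continuous_const continuous_snd)
  set et : ℝ × ℝ → ℝ≥0∞ :=
    ({p : ℝ × ℝ | 0 < p.1 ∧ 0 < p.2}).indicator (fun p => ENNReal.ofReal (η p)) with het_def
  have het_meas : Measurable et :=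
    aux_indicator_measurable hU (ENNReal.continuous_ofReal.comp_continuousOn hηc)
  set qt : ℝ → ℝ := (Set.Ioi (0:ℝ)).indicator q with hqt_def
  have hqt_meas : Measurable qt := aux_qt_measurable hq
  have hqt : ∀ u : ℝ, 0 < u → qt u = q u := fun u hu => Set.indicator_of_mem hu q
  have het : ∀ u v : ℝ, 0 < u → 0 < v → et (u, v) = ENNReal.ofReal (η (u, v)) :=
    fun u v hu hv => by
      simp only [het_def]
      exact Set.indicator_of_mem (show ((u,v):ℝ×ℝ) ∈ {p : ℝ × ℝ | 0 < p.1 ∧ 0 < p.2}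
        from ⟨hu, hv⟩) _
  set F : ℝ → ℝ → ℝ≥0∞ := fun ℓ u => (ENNReal.ofReal (2*ℓ))⁻¹ *
    ∫⁻ v in Set.Ioo ((1-ℓ)*qt u) ((1+ℓ)*qt u), et (u, v) with hF_def
  have hFeq : ∀ ℓ : ℝ, 0 < ℓ → ℓ < 1 → ∀ u : ℝ, 0 < u →
      F ℓ u = (ENNReal.ofReal (2*ℓ))⁻¹ *
        ∫⁻ v in Set.Ioo ((1-ℓ)*q u) ((1+ℓ)*q u), ENNReal.ofReal (η (u, v)) := by
    intro ℓ hℓ0 hℓ1 u hu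
    have hqu : 0 < q u := hqpos u hu
    have ha : 0 < (1-ℓ)*q u := by nlinarith
    simp only [hF_def]
    rw [hqt u hu]
    congr 1
    refine setLIntegral_congr_fun_ae measurableSet_Ioo (ae_of_all _ fun v hv => ?_)
    exact het u v hu (lt_trans ha hv.1)
  have h_lim : ∀ᵐ u ∂(volume.restrict (Set.Ioi (0:ℝ))),
      Tendsto (fun ℓ => F ℓ u) (nhdsWithin 0 (Set.Ioi 0))
        (nhds (ENNReal.ofReal (q u * η (u, q u)))) := by
    refine ae_restrict_of_forall_mem measurableSet_Ioi fun u hu => ?_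
    have hu0 : 0 < u := hu
    have hcont : ContinuousOn (fun v => η (u, v)) (Set.Ioi 0) :=
      hηc.comp (Continuous.prodMk_right u).continuousOn (fun v hv => ⟨hu0, hv⟩)
    have hten := aux_enn_ratio (hqpos u hu0) hcont (fun v hv => hηpos u v hu0 hv)
    refine Tendsto.congr' ?_ hten
    filter_upwards [Ioo_mem_nhdsGT (zero_lt_one : (0:ℝ) < 1)] with ℓ hℓ
    exact (hFeq ℓ hℓ.1 hℓ.2 u hu0).symm
  have h_bound : ∀ᶠ ℓ in nhdsWithin (0:ℝ) (Set.Ioi 0),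
      ∀ᵐ u ∂(volume.restrict (Set.Ioi (0:ℝ))),
        F ℓ u ≤ ENNReal.ofReal (8*K*q u*(u^2+ q u ^2) ^ (-(3:ℝ)/2)) := by
    filter_upwards [Ioc_mem_nhdsGT
      (by norm_num : (0:ℝ) < 1/2)] with ℓ hℓ
    refine ae_restrict_of_forall_mem measurableSet_Ioi fun u hu => ?_
    rw [hFeq ℓ hℓ.1 (by linarith [hℓ.2]) u hu]
    exact aux_bound hK hηbd hu (hqpos u hu) hℓ.1 hℓ.2
  have hF_meas : ∀ᶠ ℓ in nhdsWithin (0:ℝ) (Set.Ioi 0), Measurable (F ℓ) :=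
    Eventually.of_forall fun ℓ => aux_F_meas hqt_meas het_meas ℓ
  have hmain := tendsto_lintegral_filter_of_dominated_convergence
    (μ := volume.restrict (Set.Ioi (0:ℝ)))
    (f := fun u => ENNReal.ofReal (q u * η (u, q u)))
    (fun u => ENNReal.ofReal (8*K*q u*(u^2+ q u ^2) ^ (-(3:ℝ)/2)))
    hF_meas h_bound (aux_fin hK hq hqpos).ne h_lim
  constructor
  · refine Tendsto.congr' ?_ hmain
    filter_upwards [Ioo_mem_nhdsGT (zero_lt_one : (0:ℝ) < 1)] with ℓ hℓ
    have hr : (ENNReal.ofReal (2*ℓ))⁻¹ ≠ ⊤ := by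
      simp only [ne_eq, ENNReal.inv_eq_top, ENNReal.ofReal_eq_zero, not_le]
      linarith [hℓ.1]
    calc ∫⁻ u in Set.Ioi (0:ℝ), F ℓ u
        = (ENNReal.ofReal (2*ℓ))⁻¹ * ∫⁻ u in Set.Ioi (0:ℝ),
            ∫⁻ v in Set.Ioo ((1-ℓ)*qt u) ((1+ℓ)*qt u), et (u, v) :=
          lintegral_const_mul' _ _ hr
      _ = (ENNReal.ofReal (2*ℓ))⁻¹ * ∫⁻ u in Set.Ioi (0:ℝ),
            ∫⁻ v in Set.Ioo ((1-ℓ)*q u) ((1+ℓ)*q u), ENNReal.ofReal (η (u, v)) := by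
          congr 1
          refine setLIntegral_congr_fun_ae measurableSet_Ioi (ae_of_all _ fun u hu => ?_)
          have hu0 : (0:ℝ) < u := hu
          have hqu : 0 < q u := hqpos u hu0
          have ha : 0 < (1-ℓ)*q u := by nlinarith [hℓ.1, hℓ.2]
          rw [hqt u hu0]
          refine setLIntegral_congr_fun_ae measurableSet_Ioo (ae_of_all _ fun v hv => ?_)
          exact het u v hu0 (lt_trans ha hv.1)
  · refine lt_of_le_of_lt ?_ (aux_fin hK hq hqpos)
    refine lintegral_mono_ae ((ae_restrict_iff' measurableSet_Ioi).mpr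
      (ae_of_all _ fun u hu => ?_))
    have hu0 : (0:ℝ) < u := hu
    have hqu : 0 < q u := hqpos u hu0
    refine ENNReal.ofReal_le_ofReal ?_
    have h1 := hηbd u (q u) hu0 hqu
    have hrn : (0:ℝ) ≤ (u^2 + q u ^2) ^ (-(3:ℝ)/2) := by positivity
    nlinarith [mul_le_mul_of_nonneg_left h1 hqu.le,
      mul_nonneg (mul_nonneg hK.le hqu.le) hrn]
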